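/- A complete set of representatives for the orbits of SL₂(ℤ) acting on M₂(ℚ) by right multiplication is given by: the zero matrix; the matrices [[0,a],[0,b]] with a, b ∈ ℚ and either a > 0, or a = 0 and b > 0; and the matrices [[a,b],[0,α]] with a ∈ ℚ, a > 0, α ∈ ℚ×, and b ∈ ℚ taken modulo aℤ. -/

import Mathlib

open Matrix

/-- The distinguished set of matrices in `M₂(ℚ)`: the zero matrix;
`[[0,a],[0,b]]` with `a > 0`, or `a = 0` and `b > 0`;
`[[a,b],[0,α]]` with `a > 0`, `α ≠ 0`, and `0 ≤ b < a` (i.e. `b` mod `aℤ`). -/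
def orbitReps : Set (Matrix (Fin 2) (Fin 2) ℚ) :=
  {0}
  ∪ {M | ∃ a b : ℚ, (0 < a ∨ (a = 0 ∧ 0 < b)) ∧ M = !![0, a; 0, b]}
  ∪ {M | ∃ a b α : ℚ, 0 < a ∧ α ≠ 0 ∧ 0 ≤ b ∧ b < a ∧ M = !![a, b; 0, α]}

abbrev SL2 : Type := Matrix.SpecialLinearGroup (Fin 2) ℤ

def toQ (γ : SL2) : Matrix (Fin 2) (Fin 2) ℚ :=
  (γ : Matrix (Fin 2) (Fin 2) ℤ).map (Int.cast : ℤ → ℚ)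

def mkSL2 (a b c d : ℤ) (h : a * d - b * c = 1) : SL2 :=
  ⟨!![a, b; c, d], by rw [Matrix.det_fin_two_of]; exact h⟩

lemma toQ_mkSL2 (a b c d : ℤ) (h : a * d - b * c = 1) :
    toQ (mkSL2 a b c d h) = !![(a:ℚ), b; c, d] := by
  ext i j; fin_cases i <;> fin_cases j <;> simp [toQ, mkSL2]

lemma toQ_mul (γ₁ γ₂ : SL2) : toQ (γ₁ * γ₂) = toQ γ₁ * toQ γ₂ := by
  simp only [toQ, Matrix.SpecialLinearGroup.coe_mul]
  exact Matrix.map_mul (f := Int.castRingHom ℚ)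

lemma det_toQ (γ : SL2) : (toQ γ).det = 1 := by
  rw [toQ, show ((γ : Matrix (Fin 2) (Fin 2) ℤ).map (Int.cast : ℤ → ℚ)) =
    (Int.castRingHom ℚ).mapMatrix (γ : Matrix (Fin 2) (Fin 2) ℤ) from rfl,
    ← RingHom.map_det]
  simp

lemma int_reduce (p q : ℤ) (hpq : p ≠ 0 ∨ q ≠ 0) :
    ∃ a b c d : ℤ, a * d - b * c = 1 ∧ p * a + q * c = 0 ∧
      p * b + q * d = Int.gcd p q := by
  set g : ℤ := (Int.gcd p q : ℤ) with hg
  have hg0 : g ≠ 0 := by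
    simp only [hg, ne_eq, Int.natCast_eq_zero, Int.gcd_eq_zero_iff]
    tauto
  obtain ⟨p', hp'⟩ : g ∣ p := Int.gcd_dvd_left p q
  obtain ⟨q', hq'⟩ : g ∣ q := Int.gcd_dvd_right p q
  have hbez : g = p * Int.gcdA p q + q * Int.gcdB p q := Int.gcd_eq_gcd_ab p q
  refine ⟨q', Int.gcdA p q, -p', Int.gcdB p q, ?_, ?_, ?_⟩
  · have key : g * (q' * Int.gcdB p q - Int.gcdA p q * (-p')) = g * 1 := by
      rw [mul_one]
      calc g * (q' * Int.gcdB p q - Int.gcdA p q * (-p'))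
          = p * Int.gcdA p q + q * Int.gcdB p q := by rw [hp', hq']; ring
        _ = g := hbez.symm
    exact mul_left_cancel₀ hg0 key
  · rw [hp', hq']; ring
  · exact hbez.symm

lemma rat_reduce (x y : ℚ) (hxy : x ≠ 0 ∨ y ≠ 0) :
    ∃ (γ : SL2) (t : ℚ), 0 < t ∧
      x * toQ γ 0 0 + y * toQ γ 1 0 = 0 ∧
      x * toQ γ 0 1 + y * toQ γ 1 1 = t := by
  have hp : (x.num * y.den : ℤ) = x.num * y.den := rfl
  have hxden : (x.den : ℚ) ≠ 0 := by positivity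
  have hyden : (y.den : ℚ) ≠ 0 := by positivity
  have hxnum : x * x.den = x.num := Rat.mul_den_eq_num x
  have hynum : y * y.den = y.num := Rat.mul_den_eq_num y
  have hpq : x.num * (y.den:ℤ) ≠ 0 ∨ y.num * (x.den:ℤ) ≠ 0 := by
    rcases hxy with hx | hy
    · exact Or.inl (mul_ne_zero (Rat.num_ne_zero.2 hx) (by exact_mod_cast y.den_nz))
    · exact Or.inr (mul_ne_zero (Rat.num_ne_zero.2 hy) (by exact_mod_cast x.den_nz))
  obtain ⟨a, b, c, d, hdet, h1, h2⟩ := int_reduce _ _ hpq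
  have hgpos : (0:ℚ) < (Int.gcd (x.num * y.den) (y.num * x.den) : ℚ) := by
    have : Int.gcd (x.num * (y.den:ℤ)) (y.num * (x.den:ℤ)) ≠ 0 := by
      simp only [ne_eq, Int.gcd_eq_zero_iff]; tauto
    positivity
  refine ⟨mkSL2 a b c d hdet, (Int.gcd (x.num * (y.den:ℤ)) (y.num * (x.den:ℤ)) : ℚ) / ((x.den : ℚ) * y.den), ?_, ?_, ?_⟩
  · positivity
  · rw [toQ_mkSL2]
    have key : (x * a + y * c) * ((x.den : ℚ) * y.den) = 0 := by
      have := congrArg (Int.cast : ℤ → ℚ) h1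
      push_cast at this
      linear_combination this + ((y.den:ℚ) * a) * hxnum + ((x.den:ℚ) * c) * hynum
    have h0 : ((x.den : ℚ) * y.den) ≠ 0 := mul_ne_zero hxden hyden
    have := mul_eq_zero.1 key
    simp only [Matrix.cons_val', Matrix.cons_val_zero, Matrix.cons_val_one, Matrix.head_cons,
      Matrix.empty_val', Matrix.cons_val_fin_one, Matrix.head_fin_const] at *
    tauto
  · rw [toQ_mkSL2]
    have key : (x * b + y * d) * ((x.den : ℚ) * y.den) = (Int.gcd (x.num * (y.den:ℤ)) (y.num * (x.den:ℤ)) : ℚ) := by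
      have := congrArg (Int.cast : ℤ → ℚ) h2
      push_cast at this
      push_cast
      linear_combination this + ((y.den:ℚ) * b) * hxnum + ((x.den:ℚ) * d) * hynum
    have h0 : ((x.den : ℚ) * y.den) ≠ 0 := mul_ne_zero hxden hyden
    field_simp
    simp only [Matrix.of_apply, Matrix.cons_val', Matrix.cons_val_zero, Matrix.cons_val_one, Matrix.head_cons,
      Matrix.empty_val', Matrix.cons_val_fin_one, Matrix.head_fin_const] at *
    linarith [key]

lemma toQ_one : toQ 1 = 1 := by
  ext i j; fin_cases i <;> fin_cases j <;> simp [toQ]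

lemma mem_reps₁ : (0 : Matrix (Fin 2) (Fin 2) ℚ) ∈ orbitReps := Or.inl (Or.inl rfl)
lemma mem_reps₂ {a b : ℚ} (h : 0 < a ∨ (a = 0 ∧ 0 < b)) :
    !![(0:ℚ), a; 0, b] ∈ orbitReps := Or.inl (Or.inr ⟨a, b, h, rfl⟩)
lemma mem_reps₃ {a b α : ℚ} (h1 : 0 < a) (h2 : α ≠ 0) (h3 : 0 ≤ b) (h4 : b < a) :
    !![a, b; 0, α] ∈ orbitReps := Or.inr ⟨a, b, α, h1, h2, h3, h4, rfl⟩

lemma exists_rep (A : Matrix (Fin 2) (Fin 2) ℚ) :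
    ∃ R ∈ orbitReps, ∃ γ : SL2, A * toQ γ = R := by
  by_cases hA0 : A = 0
  · exact ⟨0, mem_reps₁, 1, by rw [toQ_one, mul_one, hA0]⟩
  by_cases hr1 : A 1 0 = 0 ∧ A 1 1 = 0
  · -- bottom row zero, top row nonzero
    have htop : A 0 0 ≠ 0 ∨ A 0 1 ≠ 0 := by
      by_contra h
      push_neg at h
      apply hA0
      ext i j; fin_cases i <;> fin_cases j <;>
        simp [h.1, h.2, hr1.1, hr1.2]
    obtain ⟨γ, t, ht, e1, e2⟩ := rat_reduce (A 0 0) (A 0 1) htop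
    have hB : A * toQ γ = !![0, t; 0, 0] := by
      ext i j
      fin_cases i <;> fin_cases j <;>
        simp [Matrix.mul_apply, Fin.sum_univ_two, hr1.1, hr1.2] <;>
        [exact e1; exact e2]
    exact ⟨!![0, t; 0, 0], mem_reps₂ (Or.inl ht), γ, hB⟩
  · -- bottom row nonzero
    have hbot : A 1 0 ≠ 0 ∨ A 1 1 ≠ 0 := by
      rcases not_and_or.1 hr1 with h | h
      · exact Or.inl h
      · exact Or.inr h
    obtain ⟨γ, α, hα, e1, e2⟩ := rat_reduce (A 1 0) (A 1 1) hbot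
    set b0 : ℚ := A 0 0 * toQ γ 0 0 + A 0 1 * toQ γ 1 0 with hb0def
    set b1 : ℚ := A 0 0 * toQ γ 0 1 + A 0 1 * toQ γ 1 1 with hb1def
    have hB : A * toQ γ = !![b0, b1; 0, α] := by
      ext i j
      fin_cases i <;> fin_cases j <;>
        simp [Matrix.mul_apply, Fin.sum_univ_two]
      · rfl
      · rfl
      · exact e1
      · exact e2
    have hdet : b0 * α = A.det := by
      have h2 : (A * toQ γ).det = A.det := by rw [Matrix.det_mul, det_toQ, mul_one]
      rw [hB, Matrix.det_fin_two_of] at h2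
      linarith
    by_cases hd : A.det = 0
    · have hb0 : b0 = 0 := by
        rcases mul_eq_zero.1 (hdet.trans hd) with h | h
        · exact h
        · exact absurd h (ne_of_gt hα)
      by_cases hb1 : 0 ≤ b1
      · refine ⟨!![0, b1; 0, α], mem_reps₂ ?_, γ, by rw [hB, hb0]⟩
        rcases hb1.eq_or_lt with h | h
        · exact Or.inr ⟨h.symm, hα⟩
        · exact Or.inl h
      · push_neg at hb1
        refine ⟨!![0, -b1; 0, -α], mem_reps₂ (Or.inl (by linarith)), γ * mkSL2 (-1) 0 0 (-1) (by norm_num), ?_⟩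
        rw [toQ_mul, ← mul_assoc, hB, toQ_mkSL2]
        norm_num [Matrix.mul_fin_two, hb0]
    · have hb0 : b0 ≠ 0 := fun h => hd (by rw [← hdet, h, zero_mul])
      set ε : ℤ := if 0 < b0 then 1 else -1 with hεdef
      have hε2 : (ε : ℚ) * ε = 1 := by
        rcases ite_eq_or_eq (0 < b0) 1 (-1) with h | h <;> rw [hεdef, h] <;> norm_num
      have haa : 0 < b0 * (ε : ℚ) := by
        by_cases h : 0 < b0
        · rw [hεdef, if_pos h]; push_cast; linarith
        · rw [hεdef, if_neg h]; push_cast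
          rcases hb0.lt_or_gt with h' | h'
          · nlinarith
          · exact absurd h' h
      set aa : ℚ := b0 * (ε : ℚ) with haadef
      set bb : ℚ := b1 * (ε : ℚ) with hbbdef
      set k : ℤ := ⌊bb / aa⌋ with hkdef
      have hdetδ : ε * ε - (-ε * k) * 0 = 1 := by
        rcases ite_eq_or_eq (0 < b0) 1 (-1) with h | h <;> rw [hεdef, h] <;> ring
      refine ⟨!![aa, bb - aa * k; 0, α * ε], ?_, γ * mkSL2 ε (-ε * k) 0 ε hdetδ, ?_⟩
      · refine mem_reps₃ haa ?_ ?_ ?_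
        · intro h
          rcases mul_eq_zero.1 h with h | h
          · exact absurd h (ne_of_gt hα)
          · rw [h] at hε2; norm_num at hε2
        · have h1 : (k : ℚ) ≤ bb / aa := Int.floor_le _
          have h2 : bb = aa * (bb / aa) := by field_simp
          nlinarith
        · have h1 : bb / aa < k + 1 := Int.lt_floor_add_one _
          have h2 : bb = aa * (bb / aa) := by field_simp
          nlinarith
      · rw [toQ_mul, ← mul_assoc, hB, toQ_mkSL2]
        rw [Matrix.mul_fin_two]
        push_cast
        ext i j
        fin_cases i <;> fin_cases j <;> simp <;> ring
lemma reps_uniq {R₁ R₂ : Matrix (Fin 2) (Fin 2) ℚ} (h₁ : R₁ ∈ orbitReps)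
    (h₂ : R₂ ∈ orbitReps) (γ : SL2) (hm : R₁ * toQ γ = R₂) : R₁ = R₂ := by
  set E : Matrix (Fin 2) (Fin 2) ℤ := (γ : Matrix (Fin 2) (Fin 2) ℤ) with hE
  have hdet : E 0 0 * E 1 1 - E 0 1 * E 1 0 = 1 := by
    have := γ.prop
    rw [Matrix.det_fin_two] at this
    exact this
  have hent : ∀ i j, R₁ i 0 * ((E 0 j : ℤ) : ℚ) + R₁ i 1 * ((E 1 j : ℤ) : ℚ) = R₂ i j := by
    intro i j
    rw [← hm]
    simp [toQ, Matrix.mul_apply, Fin.sum_univ_two, hE]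
  have hdetQ : ((E 0 0 : ℚ)) * E 1 1 - (E 0 1 : ℚ) * E 1 0 = 1 := by exact_mod_cast hdet
  rcases h₁ with (hz₁ | ⟨a, b, hab, rfl⟩) | ⟨a, b, α, ha, hα, hb0, hba, rfl⟩
  · rw [Set.mem_singleton_iff] at hz₁
    subst hz₁
    rw [zero_mul] at hm
    exact hm
  · rcases h₂ with (hz₂ | ⟨a', b', hab', rfl⟩) | ⟨a', b', α', ha', hα', hb0', hba', rfl⟩
    · rw [Set.mem_singleton_iff] at hz₂
      subst hz₂
      exfalso
      have e00 := hent 0 0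
      have e01 := hent 0 1
      have e10 := hent 1 0
      have e11 := hent 1 1
      simp [-mul_eq_zero] at e00 e01 e10 e11
      rcases hab with h | ⟨h, h'⟩
      · have g0 : ((E 1 0 : ℤ) : ℚ) = 0 := by
          rcases mul_eq_zero.1 e00 with hh | hh
          · exact absurd hh (ne_of_gt h)
          · exact hh
        have g1 : ((E 1 1 : ℤ) : ℚ) = 0 := by
          rcases mul_eq_zero.1 e01 with hh | hh
          · exact absurd hh (ne_of_gt h)
          · exact hh
        rw [g0, g1] at hdetQ; simp at hdetQ
      · have g0 : ((E 1 0 : ℤ) : ℚ) = 0 := by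
          rcases mul_eq_zero.1 e10 with hh | hh
          · exact absurd hh (ne_of_gt h')
          · exact hh
        have g1 : ((E 1 1 : ℤ) : ℚ) = 0 := by
          rcases mul_eq_zero.1 e11 with hh | hh
          · exact absurd hh (ne_of_gt h')
          · exact hh
        rw [g0, g1] at hdetQ; simp at hdetQ
    · -- type2-type2
      have e00 := hent 0 0
      have e01 := hent 0 1
      have e10 := hent 1 0
      have e11 := hent 1 1
      simp [-mul_eq_zero] at e00 e01 e10 e11
      have hg0 : ((E 1 0 : ℤ) : ℚ) = 0 := by
        rcases hab with h | ⟨h, h'⟩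
        · rcases mul_eq_zero.1 e00 with hh | hh
          · exact absurd hh (ne_of_gt h)
          · exact hh
        · rcases mul_eq_zero.1 e10 with hh | hh
          · exact absurd hh (ne_of_gt h')
          · exact hh
      have hg0' : E 1 0 = 0 := by exact_mod_cast hg0
      rw [hg0'] at hdet
      simp at hdet
      rcases Int.eq_one_or_neg_one_of_mul_eq_one' hdet with ⟨hu, hv⟩ | ⟨hu, hv⟩
      · rw [hv] at e01 e11
        norm_num at e01 e11
        rw [e01, e11]
      · exfalso
        rw [hv] at e01 e11
        push_cast at e01 e11
        rcases hab with h | ⟨h, h'⟩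
        · rcases hab' with h2 | ⟨h2, h2'⟩ <;> nlinarith
        · rcases hab' with h2 | ⟨h2, h2'⟩ <;> nlinarith
    · -- type2-type3 det contradiction
      exfalso
      have hdm : (!![(0:ℚ), a; 0, b] * toQ γ).det = !![a', b'; 0, α'].det := by rw [hm]
      rw [Matrix.det_mul, det_toQ, mul_one, Matrix.det_fin_two_of, Matrix.det_fin_two_of] at hdm
      simp at hdm
      rcases hdm with h | h
      · exact ha'.ne' h
      · exact hα' h
  · rcases h₂ with (hz₂ | ⟨a', b', hab', rfl⟩) | ⟨a', b', α', ha', hα', hb0', hba', rfl⟩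
    · rw [Set.mem_singleton_iff] at hz₂
      subst hz₂
      exfalso
      have e10 := hent 1 0
      have e11 := hent 1 1
      simp [-mul_eq_zero] at e10 e11
      have g0 : ((E 1 0 : ℤ) : ℚ) = 0 := by
        rcases mul_eq_zero.1 e10 with hh | hh
        · exact absurd hh hα
        · exact hh
      have g1 : ((E 1 1 : ℤ) : ℚ) = 0 := by
        rcases mul_eq_zero.1 e11 with hh | hh
        · exact absurd hh hα
        · exact hh
      rw [g0, g1] at hdetQ; simp at hdetQ
    · -- type3-type2 det contradiction
      exfalso
      have hdm : (!![a, b; 0, α] * toQ γ).det = !![(0:ℚ), a'; 0, b'].det := by rw [hm]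
      rw [Matrix.det_mul, det_toQ, mul_one, Matrix.det_fin_two_of, Matrix.det_fin_two_of] at hdm
      simp at hdm
      rcases hdm with h | h
      · exact ha.ne' h
      · exact hα h
    · -- type3-type3
      have e00 := hent 0 0
      have e01 := hent 0 1
      have e10 := hent 1 0
      have e11 := hent 1 1
      simp [-mul_eq_zero] at e00 e01 e10 e11
      have hg0 : ((E 1 0 : ℤ) : ℚ) = 0 := by
        rcases mul_eq_zero.1 e10 with hh | hh
        · exact absurd hh hα
        · exact hh
      have hg0' : E 1 0 = 0 := by exact_mod_cast hg0
      rw [hg0'] at hdet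
      simp at hdet
      rcases Int.eq_one_or_neg_one_of_mul_eq_one' hdet with ⟨hu, hv⟩ | ⟨hu, hv⟩
      · rw [hu] at e00
        rw [hv] at e01 e11
        rw [hg0] at e00
        norm_num at e00 e01 e11
        -- e00 : a = a', e01 : a * E01 + b = b', e11 : α = α'
        have hf : ((E 0 1 : ℤ) : ℚ) = 0 := by
          have h1 : b' - b = a * E 0 1 := by linarith
          have hlt : ((E 0 1 : ℤ) : ℚ) < 1 := by nlinarith
          have hgt : (-1 : ℚ) < ((E 0 1 : ℤ) : ℚ) := by nlinarith
          have : E 0 1 = 0 := by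
            have hlt' : E 0 1 < 1 := by exact_mod_cast hlt
            have hgt' : -1 < E 0 1 := by exact_mod_cast hgt
            omega
          exact_mod_cast this
        rw [hf] at e01
        norm_num at e01
        rw [e00, e01, e11]
      · exfalso
        rw [hu] at e00
        rw [hg0] at e00
        push_cast at e00
        nlinarith

/-- `orbitReps` is a complete set of representatives for the orbits of `SL₂(ℤ)`
acting on `M₂(ℚ)` by right multiplication: every rational 2×2 matrix lies in the
orbit of exactly one element of `orbitReps`. -/
theorem orbitReps_complete (A : Matrix (Fin 2) (Fin 2) ℚ) :
    ∃! R : Matrix (Fin 2) (Fin 2) ℚ, R ∈ orbitReps ∧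
      ∃ γ : Matrix.SpecialLinearGroup (Fin 2) ℤ,
        A * ((γ : Matrix (Fin 2) (Fin 2) ℤ).map (Int.cast : ℤ → ℚ)) = R := by
  obtain ⟨R, hR, γ, hγ⟩ := exists_rep A
  refine ⟨R, ⟨hR, γ, hγ⟩, ?_⟩
  rintro R' ⟨hR', γ', hγ'⟩
  refine reps_uniq hR' hR (γ'⁻¹ * γ) ?_
  have h1 : A * toQ γ' = R' := hγ'
  calc R' * toQ (γ'⁻¹ * γ) = A * toQ γ' * toQ (γ'⁻¹ * γ) := by rw [h1]
    _ = A * toQ (γ' * (γ'⁻¹ * γ)) := by simp only [toQ_mul, mul_assoc]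
    _ = A * toQ γ := by rw [mul_inv_cancel_left]
    _ = R := hγ
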